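/- Let E be a real inner product space, let g : E → ℝ be convex, and let ỹ ∈ E satisfy HasGradientAt g j ỹ with j ≠ 0 and g ỹ = 0. Suppose the base forecast is ŷ = ỹ + λ • j for some real λ > 0. Then for every y ∈ E with g y = 0, dist ỹ y < dist ŷ y. -/

import Mathlib

open RealInnerProductSpace

theorem subgrad_ineq
    {E : Type*} [NormedAddCommGroup E] [InnerProductSpace ℝ E] [CompleteSpace E]
    (g : E → ℝ) (hg : ConvexOn ℝ Set.univ g)
    (x j : E) (hgrad : HasGradientAt g j x) (y : E) :
    g x + ⟪j, y - x⟫ ≤ g y := by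
  set v := y - x with hv
  have hF : HasFDerivAt g ((InnerProductSpace.toDual ℝ E) j) x :=
    hasGradientAt_iff_hasFDerivAt.mp hgrad
  -- φ t = g (x + t • v), derivative at 0 is ⟪j, v⟫
  have hline : HasDerivAt (fun t : ℝ => x + t • v) v 0 := by
    simpa using ((hasDerivAt_id (0:ℝ)).smul_const v).const_add x
  have hφ : HasDerivAt (fun t : ℝ => g (x + t • v)) ⟪j, v⟫ 0 := by
    have hF' : HasFDerivAt g ((InnerProductSpace.toDual ℝ E) j)
        ((fun t : ℝ => x + t • v) 0) := by simpa using hF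
    have := hF'.comp_hasDerivAt 0 hline
    simpa [InnerProductSpace.toDual_apply_apply, Function.comp_def] using this
  -- slope bound on (0,1]
  have key : ⟪j, v⟫ ≤ g y - g x := by
    have htend : Filter.Tendsto (fun t : ℝ => (g (x + t • v) - g x) / t)
        (nhdsWithin 0 (Set.Ioi 0)) (nhds ⟪j, v⟫) := by
      have := hasDerivAt_iff_tendsto_slope.mp hφ
      have h2 := this.mono_left (nhdsWithin_mono 0 (by
        intro t ht
        exact ne_of_gt ht : Set.Ioi (0:ℝ) ⊆ {0}ᶜ))
      refine h2.congr' ?_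
      filter_upwards [self_mem_nhdsWithin] with t ht
      simp only [slope_def_field, zero_smul, add_zero, sub_zero]
    refine le_of_tendsto htend ?_
    filter_upwards [Ioo_mem_nhdsGT_of_mem (by norm_num : (0:ℝ) ∈ Set.Ico 0 1)] with t ht
    obtain ⟨ht0, ht1⟩ := ht
    have hconj : g (x + t • v) ≤ (1 - t) * g x + t * g y := by
      have := hg.2 (Set.mem_univ x) (Set.mem_univ y)
        (by linarith : (0:ℝ) ≤ 1 - t) (le_of_lt ht0) (by ring)
      have hx : (1 - t) • x + t • y = x + t • v := by
        simp [hv, smul_sub, sub_smul]; abel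
      simpa [hx, smul_eq_mul] using this
    rw [div_le_iff₀ ht0]
    nlinarith
  have : ⟪j, y - x⟫ ≤ g y - g x := key
  linarith

/-- Core of Lemma 2: reconciliation of a base forecast `yhat = ytil + λ • j` (with
`λ > 0`, lying on the hypograph side of a single convex constraint) strictly
improves accuracy for every coherent realisation. -/
theorem reconciliation_improves_of_convex_constraint
    {E : Type*} [NormedAddCommGroup E] [InnerProductSpace ℝ E] [CompleteSpace E]
    (g : E → ℝ) (hg : ConvexOn ℝ Set.univ g)
    (ytil j : E) (hgrad : HasGradientAt g j ytil) (hj : j ≠ 0) (h0 : g ytil = 0)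
    (lam : ℝ) (hlam : 0 < lam) (yhat : E) (hyhat : yhat = ytil + lam • j) :
    ∀ y : E, g y = 0 → dist ytil y < dist yhat y := by
  intro y hy
  have hsub := subgrad_ineq g hg ytil j hgrad y
  have hinner : ⟪j, y - ytil⟫ ≤ 0 := by rw [h0, hy] at hsub; linarith
  have hsq : dist ytil y ^ 2 < dist yhat y ^ 2 := by
    rw [dist_eq_norm, dist_eq_norm, hyhat]
    have hexp : ytil + lam • j - y = (ytil - y) + lam • j := by abel
    rw [hexp, ← real_inner_self_eq_norm_sq, ← real_inner_self_eq_norm_sq]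
    rw [inner_add_add_self]
    have h1 : ⟪ytil - y, lam • j⟫ = lam * (-⟪j, y - ytil⟫) := by
      rw [real_inner_smul_right, real_inner_comm]
      rw [show ytil - y = -(y - ytil) by abel, inner_neg_right]
    have h2 : (0:ℝ) < ⟪lam • j, lam • j⟫ := by
      rw [real_inner_self_eq_norm_sq]
      have h : lam • j ≠ 0 := by simp [smul_eq_zero, hj, ne_of_gt hlam]
      exact pow_pos (norm_pos_iff.mpr h) 2
    have h3 : ⟪lam • j, ytil - y⟫ = ⟪ytil - y, lam • j⟫ := real_inner_comm _ _
    nlinarith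
  have h1 : dist ytil y ≥ 0 := dist_nonneg
  have h2 : dist yhat y ≥ 0 := dist_nonneg
  nlinarith
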